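/- Let α ∈ ℂ and let f be holomorphic on a neighborhood of α with f(α) = α and μ := |f'(α)| > 1 (α is a repelling fixed point). Then there exist r > 0, C > 1, and a holomorphic map ψ : B(α, r) → B(α, r) with ψ(α) = α and f(ψ(z)) = z for all z ∈ B(α, r), such that for every n ≥ 1 and every x ∈ B(α, r): 1/(C μ^n) < |(ψ^n)'(x)| < C/μ^n. -/

import Mathlib

open Filter Metric Set Finset
open scoped Topology

private lemma aux_one_sub_sum_le_prod {n : ℕ} {t : ℕ → ℝ}
    (h0 : ∀ k < n, 0 ≤ t k) (h1 : ∀ k < n, t k ≤ 1) :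
    1 - ∑ k ∈ Finset.range n, t k ≤ ∏ k ∈ Finset.range n, (1 - t k) := by
  induction n with
  | zero => simp
  | succ n ih =>
    have h0' : ∀ k < n, 0 ≤ t k := fun k hk => h0 k (hk.trans (Nat.lt_succ_self n))
    have h1' : ∀ k < n, t k ≤ 1 := fun k hk => h1 k (hk.trans (Nat.lt_succ_self n))
    have ih' := ih h0' h1'
    rw [Finset.sum_range_succ, Finset.prod_range_succ]
    have hp : 0 ≤ ∏ k ∈ Finset.range n, (1 - t k) :=
      Finset.prod_nonneg fun k hk => by
        have := h1' k (Finset.mem_range.1 hk); linarith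
    have hS : 0 ≤ ∑ k ∈ Finset.range n, t k :=
      Finset.sum_nonneg fun k hk => h0' k (Finset.mem_range.1 hk)
    have htn0 := h0 n (Nat.lt_succ_self n)
    have htn1 := h1 n (Nat.lt_succ_self n)
    nlinarith [mul_le_mul_of_nonneg_right ih' (by linarith : (0:ℝ) ≤ 1 - t n),
      mul_nonneg hS htn0]

private lemma aux_prod_est {n : ℕ} {u t : ℕ → ℝ}
    (hu : ∀ k < n, |u k - 1| ≤ t k) (ht : ∀ k, 0 ≤ t k)
    (hs : ∑ k ∈ Finset.range n, t k ≤ 1/2) :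
    1/3 < ∏ k ∈ Finset.range n, u k ∧ ∏ k ∈ Finset.range n, u k < 3 := by
  have htk : ∀ k < n, t k ≤ 1/2 := fun k hk =>
    le_trans (Finset.single_le_sum (fun i _ => ht i) (Finset.mem_range.2 hk)) hs
  have hlow : ∀ k ∈ Finset.range n, 1 - t k ≤ u k := by
    intro k hk
    have h := abs_le.1 (hu k (Finset.mem_range.1 hk))
    linarith [h.1]
  have hup : ∀ k ∈ Finset.range n, u k ≤ 1 + t k := by
    intro k hk
    have h := abs_le.1 (hu k (Finset.mem_range.1 hk))
    linarith [h.2]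
  have hnn : ∀ k ∈ Finset.range n, (0:ℝ) ≤ 1 - t k := by
    intro k hk
    have := htk k (Finset.mem_range.1 hk); linarith
  constructor
  · have h1 : ∏ k ∈ Finset.range n, (1 - t k) ≤ ∏ k ∈ Finset.range n, u k :=
      Finset.prod_le_prod hnn hlow
    have h2 := aux_one_sub_sum_le_prod (n := n) (t := t)
      (fun k _ => ht k) (fun k hk => by linarith [htk k hk])
    linarith
  · have hu0 : ∀ k ∈ Finset.range n, (0:ℝ) ≤ u k := fun k hk =>
      le_trans (hnn k hk) (hlow k hk)
    have h3 : ∏ k ∈ Finset.range n, u k ≤ ∏ k ∈ Finset.range n, (1 + t k) :=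
      Finset.prod_le_prod hu0 hup
    have h4 : ∏ k ∈ Finset.range n, (1 + t k) ≤ ∏ k ∈ Finset.range n, Real.exp (t k) :=
      Finset.prod_le_prod (fun k _ => by linarith [ht k]) (fun k _ => by
        linarith [Real.add_one_le_exp (t k)])
    have h5 : ∏ k ∈ Finset.range n, Real.exp (t k)
        = Real.exp (∑ k ∈ Finset.range n, t k) := (Real.exp_sum _ _).symm
    have h6 : Real.exp (∑ k ∈ Finset.range n, t k) ≤ Real.exp (1/2) :=
      Real.exp_le_exp.2 hs
    have h7 : Real.exp (1/2) ≤ Real.exp 1 := Real.exp_le_exp.2 (by norm_num)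
    have h8 := Real.exp_one_lt_d9
    linarith

/-- Near a repelling fixed point `α` (with multiplier modulus `μ > 1`) of
a map `f` holomorphic near `α`, there is an inverse branch `ψ` of `f` fixing `α` on a
ball `B(α, r)`, and a constant `C > 1`, such that `1/(Cμⁿ) < |(ψⁿ)'(x)| < C/μⁿ` for all
`n ≥ 1` and all `x ∈ B(α, r)`. -/
theorem stmt_17
    (α : ℂ) (f : ℂ → ℂ) (U : Set ℂ) (hU : U ∈ nhds α)
    (hf : DifferentiableOn ℂ f U) (hfix : f α = α)
    (μ : ℝ) (hμ : μ = ‖deriv f α‖) (hrep : 1 < μ) :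
    ∃ r : ℝ, 0 < r ∧ ∃ C : ℝ, 1 < C ∧ ∃ ψ : ℂ → ℂ,
      DifferentiableOn ℂ ψ (Metric.ball α r) ∧
      Set.MapsTo ψ (Metric.ball α r) (Metric.ball α r) ∧
      ψ α = α ∧
      (∀ z ∈ Metric.ball α r, f (ψ z) = z) ∧
      ∀ n : ℕ, 1 ≤ n → ∀ x ∈ Metric.ball α r,
        1 / (C * μ ^ n) < ‖deriv (ψ^[n]) x‖ ∧
        ‖deriv (ψ^[n]) x‖ < C / μ ^ n := by
  classical
  have hμ0 : (0:ℝ) < μ := lt_trans one_pos hrep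
  set a : ℂ := deriv f α with ha
  have hμn : ‖a‖ = μ := by rw [hμ]
  have ha0 : a ≠ 0 := by
    intro h
    rw [h] at hμn
    simp at hμn
    exact absurd hμn.symm (ne_of_gt hμ0)
  have hIU : α ∈ interior U := mem_interior_iff_mem_nhds.2 hU
  have hAn : AnalyticOnNhd ℂ f (interior U) :=
    (hf.mono interior_subset).analyticOnNhd isOpen_interior
  have hfa : AnalyticAt ℂ f α := hAn α hIU
  have hd : HasStrictDerivAt f a α := hfa.hasStrictFDerivAt.hasStrictDerivAt
  set ψ : ℂ → ℂ := hd.localInverse f a α ha0 with hψdef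
  have hF := hd.hasStrictFDerivAt_equiv ha0
  have hψα : ψ α = α := by
    have := hF.localInverse_apply_image
    rwa [hfix] at this
  have hrinv : ∀ᶠ y in 𝓝 α, f (ψ y) = y := by
    have := hF.eventually_right_inverse
    rwa [hfix] at this
  -- continuity of ψ near α
  have htgt : α ∈ (hF.toOpenPartialHomeomorph f).target := by
    have := hF.image_mem_toOpenPartialHomeomorph_target
    rwa [hfix] at this
  have hconte : ∀ᶠ y in 𝓝 α, ContinuousAt ψ y := by
    filter_upwards [(hF.toOpenPartialHomeomorph f).open_target.eventually_mem htgt] with y hy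
    exact (hF.toOpenPartialHomeomorph f).continuousAt_symm hy
  -- deriv f analytic near α
  have hdf : AnalyticAt ℂ (deriv f) α := hAn.deriv α hIU
  have hdfne : ∀ᶠ z in 𝓝 α, deriv f z ≠ 0 :=
    hdf.continuousAt.eventually_ne ha0
  have hdiffU : ∀ᶠ z in 𝓝 α, DifferentiableAt ℂ f z := by
    filter_upwards [isOpen_interior.eventually_mem hIU] with z hz
    exact (hAn z hz).differentiableAt
  have hψc : ContinuousAt ψ α := hconte.self_of_nhds
  have hψt : Tendsto ψ (𝓝 α) (𝓝 α) := by
    have := hψc.tendsto; rwa [hψα] at this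
  have hmapV : ∀ᶠ y in 𝓝 α, DifferentiableAt ℂ f (ψ y) ∧ deriv f (ψ y) ≠ 0 :=
    hψt.eventually (hdiffU.and hdfne)
  -- strict derivative of ψ at α
  have hinv : HasStrictDerivAt ψ a⁻¹ α := by
    have := hd.to_localInverse ha0
    rwa [hfix] at this
  have hψd : HasDerivAt ψ a⁻¹ α := hinv.hasDerivAt
  -- contraction constant
  set l : ℝ := (1 + μ⁻¹) / 2 with hl
  have hμinv : μ⁻¹ < 1 := by
    rw [inv_lt_one_iff₀]; right; exact hrep
  have hμinv0 : (0:ℝ) < μ⁻¹ := inv_pos.2 hμ0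
  have hl1 : l < 1 := by rw [hl]; linarith
  have hl0 : (0:ℝ) < l := by rw [hl]; linarith
  have hlμ : μ⁻¹ < l := by rw [hl]; linarith
  -- contraction estimate
  have hcon : ∀ᶠ y in 𝓝 α, ‖ψ y - α‖ ≤ l * ‖y - α‖ := by
    have hlo := (hasDerivAt_iff_isLittleO.1 hψd).def (by linarith : (0:ℝ) < l - μ⁻¹)
    filter_upwards [hlo] with y hy
    rw [hψα] at hy
    have h1 : ‖ψ y - α‖ ≤ ‖ψ y - α - (y - α) * a⁻¹‖ + ‖(y - α) * a⁻¹‖ := by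
      calc ‖ψ y - α‖ = ‖(ψ y - α - (y - α) * a⁻¹) + (y - α) * a⁻¹‖ := by ring_nf
        _ ≤ _ := norm_add_le _ _
    have h2 : ‖(y - α) * a⁻¹‖ = ‖y - α‖ * μ⁻¹ := by
      rw [norm_mul, norm_inv, hμn]
    have h3 : ‖ψ y - α - (y - α) * a⁻¹‖ ≤ (l - μ⁻¹) * ‖y - α‖ := by
      simpa [smul_eq_mul] using hy
    nlinarith [norm_nonneg (y - α)]
  -- the Lipschitz-type bound on the normalized derivative
  set g : ℂ → ℂ := fun y => a * (deriv f (ψ y))⁻¹ with hg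
  have hgd : DifferentiableAt ℂ g α := by
    have h1 : DifferentiableAt ℂ ψ α := hψd.differentiableAt
    have h2 : DifferentiableAt ℂ (deriv f) (ψ α) := by
      rw [hψα]; exact hdf.differentiableAt
    have h3 : DifferentiableAt ℂ (fun y => deriv f (ψ y)) α := h2.comp α h1
    have h4 : deriv f (ψ α) ≠ 0 := by rw [hψα]; exact ha0
    exact (differentiableAt_const a).mul (h3.inv h4)
  have hgα : g α = 1 := by
    rw [hg]; simp only [hψα]
    exact mul_inv_cancel₀ ha0
  obtain ⟨K₀, hK₀⟩ := hgd.isBigO_sub.bound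
  set K : ℝ := max K₀ 1 with hKdef
  have hK1 : (1:ℝ) ≤ K := le_max_right _ _
  have hK0 : (0:ℝ) < K := lt_of_lt_of_le one_pos hK1
  have hKb : ∀ᶠ y in 𝓝 α, ‖g y - 1‖ ≤ K * ‖y - α‖ := by
    filter_upwards [hK₀] with y hy
    rw [hgα] at hy
    calc ‖g y - 1‖ ≤ K₀ * ‖y - α‖ := hy
      _ ≤ K * ‖y - α‖ := by
          apply mul_le_mul_of_nonneg_right (le_max_left _ _) (norm_nonneg _)
  -- choose the radius
  obtain ⟨r₀, hr₀, hball⟩ := Metric.eventually_nhds_iff_ball.1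
    (hrinv.and (hconte.and (hmapV.and (hcon.and hKb))))
  set r : ℝ := min r₀ ((1 - l) / (2 * K)) with hrdef
  have hr : 0 < r := lt_min hr₀ (div_pos (by linarith) (by positivity))
  have hrr₀ : r ≤ r₀ := min_le_left _ _
  have hrK : K * r ≤ (1 - l) / 2 := by
    have : r ≤ (1 - l) / (2 * K) := min_le_right _ _
    calc K * r ≤ K * ((1 - l) / (2 * K)) := by
          exact mul_le_mul_of_nonneg_left this (le_of_lt hK0)
      _ = (1 - l) / 2 := by field_simp
  have hsub : Metric.ball α r ⊆ Metric.ball α r₀ := Metric.ball_subset_ball hrr₀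
  -- derivative of ψ on the ball
  have hder : ∀ y ∈ Metric.ball α r, HasDerivAt ψ ((deriv f (ψ y))⁻¹) y := by
    intro y hy
    obtain ⟨h1, h2, ⟨h3, h4⟩, -, -⟩ := hball y (hsub hy)
    exact HasDerivAt.of_local_left_inverse h2 h3.hasDerivAt h4
      (by filter_upwards [Metric.isOpen_ball.eventually_mem hy] with z hz
          exact (hball z (hsub hz)).1)
  -- iterates stay in the ball with geometric decay
  have hit : ∀ x ∈ Metric.ball α r, ∀ k : ℕ,
      ψ^[k] x ∈ Metric.ball α r ∧ ‖ψ^[k] x - α‖ ≤ l ^ k * ‖x - α‖ := by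
    intro x hx k
    induction k with
    | zero => simpa using hx
    | succ k ih =>
      obtain ⟨hmem, hbd⟩ := ih
      have hc := (hball _ (hsub hmem)).2.2.2.1
      rw [Function.iterate_succ_apply']
      have hxr : ‖x - α‖ < r := by rwa [Metric.mem_ball, Complex.dist_eq] at hx
      have hlk : (0:ℝ) ≤ l ^ k := le_of_lt (pow_pos hl0 k)
      constructor
      · rw [Metric.mem_ball, Complex.dist_eq]
        have h1 : ‖ψ (ψ^[k] x) - α‖ ≤ l * (l ^ k * ‖x - α‖) :=
          le_trans hc (mul_le_mul_of_nonneg_left hbd (le_of_lt hl0))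
        have hle1 : l ^ (k+1) ≤ 1 := pow_le_one₀ (le_of_lt hl0) (le_of_lt hl1)
        calc ‖ψ (ψ^[k] x) - α‖ ≤ l ^ (k+1) * ‖x - α‖ := by
              rw [pow_succ]; nlinarith
          _ ≤ 1 * ‖x - α‖ := mul_le_mul_of_nonneg_right hle1 (norm_nonneg _)
          _ < r := by rwa [one_mul]
      · calc ‖ψ (ψ^[k] x) - α‖ ≤ l * ‖ψ^[k] x - α‖ := hc
          _ ≤ l * (l ^ k * ‖x - α‖) := mul_le_mul_of_nonneg_left hbd (le_of_lt hl0)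
          _ = l ^ (k+1) * ‖x - α‖ := by ring
  -- chain rule for iterates
  have hDn : ∀ x ∈ Metric.ball α r, ∀ n : ℕ,
      HasDerivAt (ψ^[n]) (∏ k ∈ Finset.range n, (deriv f (ψ (ψ^[k] x)))⁻¹) x := by
    intro x hx n
    induction n with
    | zero => simpa using hasDerivAt_id x
    | succ n ih =>
      have h1 : HasDerivAt ψ ((deriv f (ψ (ψ^[n] x)))⁻¹) (ψ^[n] x) :=
        hder _ (hit x hx n).1
      have h2 := h1.comp x ih
      have h3 : ψ^[n+1] = ψ ∘ ψ^[n] := Function.iterate_succ' ψ n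
      rw [h3, Finset.prod_range_succ, mul_comm]
      exact h2
  refine ⟨r, hr, 3, by norm_num, ψ, ?_, ?_, hψα, ?_, ?_⟩
  · exact fun y hy => (hder y hy).differentiableAt.differentiableWithinAt
  · intro y hy
    have := (hit y hy 1).1
    simpa using this
  · exact fun z hz => (hball z (hsub hz)).1
  · intro n hn x hx
    have hxr : ‖x - α‖ < r := by rwa [Metric.mem_ball, Complex.dist_eq] at hx
    have hDx : deriv (ψ^[n]) x = ∏ k ∈ Finset.range n, (deriv f (ψ (ψ^[k] x)))⁻¹ :=
      (hDn x hx n).deriv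
    -- the normalized product
    have hkey : μ ^ n * ‖deriv (ψ^[n]) x‖
        = ∏ k ∈ Finset.range n, ‖g (ψ^[k] x)‖ := by
      rw [hDx]
      calc μ ^ n * ‖∏ k ∈ Finset.range n, (deriv f (ψ (ψ^[k] x)))⁻¹‖
          = ‖a ^ n * ∏ k ∈ Finset.range n, (deriv f (ψ (ψ^[k] x)))⁻¹‖ := by
            rw [norm_mul, norm_pow, hμn]
        _ = ‖∏ k ∈ Finset.range n, a * (deriv f (ψ (ψ^[k] x)))⁻¹‖ := by
            congr 1
            rw [Finset.prod_mul_distrib, Finset.prod_const, Finset.card_range]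
        _ = ∏ k ∈ Finset.range n, ‖g (ψ^[k] x)‖ := by
            rw [norm_prod]
    -- bounds on individual factors
    have hu : ∀ k < n, |‖g (ψ^[k] x)‖ - 1| ≤ K * r * l ^ k := by
      intro k hk
      have hmem := (hit x hx k).1
      have hKk := (hball _ (hsub hmem)).2.2.2.2
      have hbd := (hit x hx k).2
      have h1 : |‖g (ψ^[k] x)‖ - 1| ≤ ‖g (ψ^[k] x) - 1‖ := by
        have := abs_norm_sub_norm_le (g (ψ^[k] x)) 1
        simpa using this
      have h2 : ‖ψ^[k] x - α‖ ≤ l ^ k * r := by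
        calc ‖ψ^[k] x - α‖ ≤ l ^ k * ‖x - α‖ := hbd
          _ ≤ l ^ k * r := mul_le_mul_of_nonneg_left (le_of_lt hxr)
              (le_of_lt (pow_pos hl0 k))
      calc |‖g (ψ^[k] x)‖ - 1| ≤ ‖g (ψ^[k] x) - 1‖ := h1
        _ ≤ K * ‖ψ^[k] x - α‖ := hKk
        _ ≤ K * (l ^ k * r) := mul_le_mul_of_nonneg_left h2 (le_of_lt hK0)
        _ = K * r * l ^ k := by ring
    -- sum of the error terms
    have hsum : ∑ k ∈ Finset.range n, K * r * l ^ k ≤ 1/2 := by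
      have hgeom : ∑ k ∈ Finset.range n, l ^ k ≤ 1 / (1 - l) := by
        rw [geom_sum_eq (ne_of_lt hl1)]
        have h1 : (0:ℝ) < 1 - l := by linarith
        have h2 : (l ^ n - 1) / (l - 1) = (1 - l ^ n) / (1 - l) := by
          rw [← neg_div_neg_eq]; ring_nf
        rw [h2, div_le_div_iff₀ h1 h1]
        nlinarith [pow_pos hl0 n]
      have hKr0 : (0:ℝ) ≤ K * r := le_of_lt (mul_pos hK0 hr)
      calc ∑ k ∈ Finset.range n, K * r * l ^ k
          = K * r * ∑ k ∈ Finset.range n, l ^ k := by rw [Finset.mul_sum]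
        _ ≤ K * r * (1 / (1 - l)) := mul_le_mul_of_nonneg_left hgeom hKr0
        _ ≤ ((1 - l) / 2) * (1 / (1 - l)) := by
            apply mul_le_mul_of_nonneg_right hrK
            exact div_nonneg zero_le_one (by linarith)
        _ = 1/2 := by
            have h1l : (1:ℝ) - l ≠ 0 := by linarith
            field_simp
    have ht0 : ∀ k, (0:ℝ) ≤ K * r * l ^ k := fun k => by positivity
    obtain ⟨hlow, hup⟩ := aux_prod_est hu ht0 hsum
    rw [← hkey] at hlow hup
    have hμpn : (0:ℝ) < μ ^ n := pow_pos hμ0 n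
    have habs : ‖deriv (ψ^[n]) x‖ = ‖deriv (ψ^[n]) x‖ :=
      rfl
    rw [habs]
    set q : ℝ := ‖deriv (ψ^[n]) x‖ with hqdef
    constructor
    · rw [div_lt_iff₀ (mul_pos (by norm_num : (0:ℝ) < 3) hμpn)]
      have hq : q * (3 * μ ^ n) = 3 * (μ ^ n * q) := by ring
      rw [hq]; linarith
    · rw [lt_div_iff₀ hμpn, mul_comm]
      exact hup
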